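/- Let S be a nonempty ordered set. If the ordered set F(S) of final segments of S under reverse inclusion is Noetherian, then for every Noetherian ordered set T, the set Decr(S, T) of decreasing maps S → T, ordered pointwise, is Noetherian. -/

import Mathlib

open Classical

section MBS

variable {D : Type*} (r : D → D → Prop) (μ : D → ℕ)

/-- A sequence is bad if no earlier term is related to a later term. -/
private def BadSeq (f : ℕ → D) : Prop := ∀ i j : ℕ, i < j → ¬ r (f i) (f j)

private def AgreesBelow (g f : ℕ → D) (n : ℕ) : Prop := ∀ m, m < n → f m = g m

private lemma pick_exists (g : ℕ → D) (n : ℕ)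
    (h : ∃ f, BadSeq r f ∧ AgreesBelow g f n) :
    ∃ f, (BadSeq r f ∧ AgreesBelow g f n) ∧
      ∀ f', BadSeq r f' → AgreesBelow g f' n → μ (f n) ≤ μ (f' n) := by
  have hne : {k | ∃ f, (BadSeq r f ∧ AgreesBelow g f n) ∧ μ (f n) = k}.Nonempty := by
    obtain ⟨f, hf⟩ := h
    exact ⟨μ (f n), f, hf, rfl⟩
  obtain ⟨f, hf, hfk⟩ := Nat.sInf_mem hne
  refine ⟨f, hf, fun f' h1 h2 => ?_⟩
  rw [hfk]
  exact Nat.sInf_le ⟨f', ⟨h1, h2⟩, rfl⟩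

private noncomputable def pick (g : ℕ → D) (n : ℕ)
    (h : ∃ f, BadSeq r f ∧ AgreesBelow g f n) :
    {f : ℕ → D // (BadSeq r f ∧ AgreesBelow g f n) ∧
      ∀ f', BadSeq r f' → AgreesBelow g f' n → μ (f n) ≤ μ (f' n)} :=
  ⟨(pick_exists r μ g n h).choose, (pick_exists r μ g n h).choose_spec⟩

private noncomputable def mbs (F0 : {f : ℕ → D // BadSeq r f}) :
    ℕ → {f : ℕ → D // BadSeq r f}
  | 0 =>
    let p := pick r μ F0.1 0 ⟨F0.1, F0.2, fun m hm => absurd hm (Nat.not_lt_zero m)⟩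
    ⟨p.1, p.2.1.1⟩
  | n + 1 =>
    let g := mbs F0 n
    let p := pick r μ g.1 (n + 1) ⟨g.1, g.2, fun _ _ => rfl⟩
    ⟨p.1, p.2.1.1⟩

private lemma mbs_zero_min (F0 : {f : ℕ → D // BadSeq r f}) :
    ∀ f', BadSeq r f' → μ ((mbs r μ F0 0).1 0) ≤ μ (f' 0) := by
  intro f' hf'
  exact (pick r μ F0.1 0 ⟨F0.1, F0.2, fun m hm => absurd hm (Nat.not_lt_zero m)⟩).2.2 f' hf'
    (fun m hm => absurd hm (Nat.not_lt_zero m))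

private lemma mbs_succ_agrees (F0 : {f : ℕ → D // BadSeq r f}) (n : ℕ) :
    AgreesBelow (mbs r μ F0 n).1 (mbs r μ F0 (n + 1)).1 (n + 1) :=
  (pick r μ (mbs r μ F0 n).1 (n + 1) ⟨(mbs r μ F0 n).1, (mbs r μ F0 n).2, fun _ _ => rfl⟩).2.1.2

private lemma mbs_succ_min (F0 : {f : ℕ → D // BadSeq r f}) (n : ℕ) :
    ∀ f', BadSeq r f' → AgreesBelow (mbs r μ F0 n).1 f' (n + 1) →
      μ ((mbs r μ F0 (n + 1)).1 (n + 1)) ≤ μ (f' (n + 1)) :=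
  (pick r μ (mbs r μ F0 n).1 (n + 1) ⟨(mbs r μ F0 n).1, (mbs r μ F0 n).2, fun _ _ => rfl⟩).2.2

private noncomputable def mbsDiag (F0 : {f : ℕ → D // BadSeq r f}) : ℕ → D :=
  fun n => (mbs r μ F0 n).1 n

private lemma mbs_agree_diag (F0 : {f : ℕ → D // BadSeq r f}) :
    ∀ m n : ℕ, m ≤ n → (mbs r μ F0 n).1 m = mbsDiag r μ F0 m := by
  intro m n h
  induction n with
  | zero =>
    have : m = 0 := Nat.le_zero.1 h
    subst this; rfl
  | succ k ih =>
    rcases Nat.eq_or_lt_of_le h with h' | h'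
    · subst h'; rfl
    · have hmk : m ≤ k := Nat.lt_succ_iff.1 h'
      rw [mbs_succ_agrees r μ F0 k m (Nat.lt_succ_of_le hmk)]
      exact ih hmk

private lemma mbsDiag_bad (F0 : {f : ℕ → D // BadSeq r f}) : BadSeq r (mbsDiag r μ F0) := by
  intro i j hij hr
  refine (mbs r μ F0 j).2 i j hij ?_
  rw [mbs_agree_diag r μ F0 i j hij.le]
  have : (mbs r μ F0 j).1 j = mbsDiag r μ F0 j := rfl
  rw [this]
  exact hr

private lemma mbsDiag_min (F0 : {f : ℕ → D // BadSeq r f}) :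
    ∀ (n : ℕ) (f' : ℕ → D), BadSeq r f' → (∀ m, m < n → f' m = mbsDiag r μ F0 m) →
      μ (mbsDiag r μ F0 n) ≤ μ (f' n) := by
  intro n f' hbad hagree
  cases n with
  | zero => exact mbs_zero_min r μ F0 f' hbad
  | succ k =>
    refine mbs_succ_min r μ F0 k f' hbad ?_
    intro m hm
    rw [hagree m hm, mbs_agree_diag r μ F0 m k (Nat.lt_succ_iff.1 hm)]

end MBS

open Classical

private lemma wqo_min {W : Type*} [PartialOrder W]
    (hW : ∀ f : ℕ → W, ∃ i j : ℕ, i < j ∧ f i ≤ f j)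
    (s : Set W) (hs : s.Nonempty) : ∃ b ∈ s, ∀ c ∈ s, ¬ c < b := by
  by_contra hcon
  push_neg at hcon
  obtain ⟨x0, hx0⟩ := hs
  choose nxt hnxt hlt using hcon
  let seq : ℕ → {x : W // x ∈ s} := fun n =>
    Nat.rec ⟨x0, hx0⟩ (fun _ p => ⟨nxt p.1 p.2, hnxt p.1 p.2⟩) n
  have hdec : ∀ n, (seq (n + 1)).1 < (seq n).1 := fun n => hlt (seq n).1 (seq n).2
  have hchain : ∀ m n, m < n → (seq n).1 < (seq m).1 := by
    intro m n h
    induction n with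
    | zero => omega
    | succ k ih =>
      rcases Nat.lt_succ_iff_lt_or_eq.1 h with h' | h'
      · exact (hdec k).trans (ih h')
      · subst h'; exact hdec m
  obtain ⟨i, j, hij, hle⟩ := hW fun n => (seq n).1
  exact absurd hle (hchain i j hij).not_ge

private lemma finite_range {S : Type*} [PartialOrder S] {W : Type*} [PartialOrder W]
    (hS : ∀ f : ℕ → S, ∃ i j : ℕ, i < j ∧ f i ≤ f j)
    (hW : ∀ f : ℕ → W, ∃ i j : ℕ, i < j ∧ f i ≤ f j)
    (φ : S → W) (hφ : Antitone φ) : (Set.range φ).Finite := by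
  by_contra hinf
  have hinf' : (Set.range φ).Infinite := hinf
  let e := Set.Infinite.natEmbedding _ hinf'
  haveI : IsTrans W (· ≤ ·) := ⟨fun _ _ _ => le_trans⟩
  haveI : IsRefl W (· ≤ ·) := ⟨le_refl⟩
  have pwoW : (Set.univ : Set W).PartiallyWellOrderedOn (· ≤ ·) := fun f => hW (fun n => (f n).1)
  obtain ⟨g, hg⟩ := pwoW.exists_monotone_subseq (f := fun n => (e n).1) (fun _ => Set.mem_univ _)
  have hmem : ∀ n : ℕ, ((e (g n)).1) ∈ Set.range φ := fun n => (e (g n)).2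
  choose x hx using hmem
  obtain ⟨i, j, hij, hle⟩ := hS x
  have h1 : (e (g i)).1 ≤ (e (g j)).1 := hg i j hij.le
  have h2 : (e (g j)).1 ≤ (e (g i)).1 := by
    rw [← hx i, ← hx j]; exact hφ hle
  have h3 : e (g i) = e (g j) := Subtype.ext (le_antisymm h1 h2)
  exact (g.strictMono hij).ne (e.injective h3)
private lemma aux_core {S : Type*} [PartialOrder S] {W : Type*} [PartialOrder W] [OrderBot W]
    (hFS : ∀ F : ℕ → {A : Set S // IsUpperSet A},
      ∃ i j : ℕ, i < j ∧ ((F j : Set S)) ⊆ (F i : Set S))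
    (hW : ∀ f : ℕ → W, ∃ i j : ℕ, i < j ∧ f i ≤ f j)
    (Φ0 : ℕ → S → W) (hΦ0 : ∀ n, Antitone (Φ0 n)) :
    ∃ i j : ℕ, i < j ∧ ∀ x, Φ0 i x ≤ Φ0 j x := by
  by_contra hcon
  push_neg at hcon
  -- `S` is a wqo
  have hS : ∀ f : ℕ → S, ∃ i j : ℕ, i < j ∧ f i ≤ f j := by
    intro f
    obtain ⟨i, j, hij, hsub⟩ := hFS (fun n => ⟨Set.Ici (f n), isUpperSet_Ici _⟩)
    exact ⟨i, j, hij, hsub (Set.mem_Ici.2 le_rfl)⟩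
  -- the domain of discourse : antitone maps `S → W`
  let D := {φ : S → W // Antitone φ}
  let r : D → D → Prop := fun d e => ∀ x, d.1 x ≤ e.1 x
  let μ : D → ℕ := fun d => ((Set.range d.1) \ {⊥}).ncard
  have hfin : ∀ d : D, ((Set.range d.1) \ {⊥}).Finite :=
    fun d => (finite_range hS hW d.1 d.2).subset Set.diff_subset
  -- a bad sequence exists
  have hbad0 : BadSeq r (fun n => (⟨Φ0 n, hΦ0 n⟩ : D)) := by
    intro i j hij hgood
    obtain ⟨x, hxx⟩ := hcon i j hij
    exact hxx (hgood x)
  -- minimal bad sequence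
  let Φ := mbsDiag r μ ⟨_, hbad0⟩
  have hΦbad : BadSeq r Φ := mbsDiag_bad r μ _
  have hΦmin : ∀ (n : ℕ) (f' : ℕ → D), BadSeq r f' → (∀ m, m < n → f' m = Φ m) →
      μ (Φ n) ≤ μ (f' n) := mbsDiag_min r μ _
  -- the range of each `Φ n` minus bottom is nonempty
  have hne : ∀ n, ((Set.range (Φ n).1) \ {⊥}).Nonempty := by
    intro n
    rcases Set.eq_empty_or_nonempty ((Set.range (Φ n).1) \ {⊥}) with h | h
    · exfalso
      apply hΦbad n (n + 1) (Nat.lt_succ_self n)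
      intro x
      have hx : (Φ n).1 x = ⊥ := by
        by_contra hx
        exact (Set.eq_empty_iff_forall_notMem.1 h ((Φ n).1 x))
          ⟨Set.mem_range_self x, by simpa using hx⟩
      rw [hx]; exact bot_le
    · exact h
  -- choose a minimal non-bottom value in the range
  have hminb : ∀ n, ∃ b ∈ (Set.range (Φ n).1) \ {⊥},
      ∀ c ∈ (Set.range (Φ n).1) \ {⊥}, ¬ c < b :=
    fun n => wqo_min hW _ (hne n)
  choose b hbmem hbmin using hminb
  -- the lowered maps
  let Ψ : ℕ → S → W := fun n x => if (Φ n).1 x ≤ b n then ⊥ else (Φ n).1 x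
  have hΨa : ∀ n, Antitone (Ψ n) := by
    intro n x y hxy
    show (if (Φ n).1 y ≤ b n then ⊥ else (Φ n).1 y) ≤
      (if (Φ n).1 x ≤ b n then ⊥ else (Φ n).1 x)
    by_cases hy : (Φ n).1 y ≤ b n
    · rw [if_pos hy]; exact bot_le
    · rw [if_neg hy]
      have hx : ¬ (Φ n).1 x ≤ b n := fun hx => hy (le_trans ((Φ n).2 hxy) hx)
      rw [if_neg hx]
      exact (Φ n).2 hxy
  have hΨle : ∀ n x, Ψ n x ≤ (Φ n).1 x := by
    intro n x
    show (if (Φ n).1 x ≤ b n then ⊥ else (Φ n).1 x) ≤ _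
    by_cases hx : (Φ n).1 x ≤ b n
    · rw [if_pos hx]; exact bot_le
    · rw [if_neg hx]
  -- the measure drops
  have hμdrop : ∀ n, μ ⟨Ψ n, hΨa n⟩ < μ (Φ n) := by
    intro n
    have hsub : (Set.range (Ψ n)) \ {⊥} ⊆ ((Set.range (Φ n).1) \ {⊥}) \ {b n} := by
      rintro w ⟨⟨x, hx⟩, hw⟩
      have hw' : w ≠ ⊥ := by simpa using hw
      have hxb : ¬ (Φ n).1 x ≤ b n := by
        intro h
        apply hw'
        rw [← hx]
        show (if (Φ n).1 x ≤ b n then ⊥ else (Φ n).1 x) = ⊥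
        rw [if_pos h]
      have hx' : w = (Φ n).1 x := by
        rw [← hx]
        show (if (Φ n).1 x ≤ b n then ⊥ else (Φ n).1 x) = _
        rw [if_neg hxb]
      refine ⟨⟨⟨x, hx'.symm⟩, hw⟩, ?_⟩
      simp only [Set.mem_singleton_iff]
      intro hwb
      exact hxb (le_of_eq (by rw [← hx', hwb]))
    have hss : ((Set.range (Φ n).1) \ {⊥}) \ {b n} ⊂ (Set.range (Φ n).1) \ {⊥} := by
      refine ⟨Set.diff_subset, fun hsup => ?_⟩
      have := hsup (hbmem n)
      simp at this
    calc μ ⟨Ψ n, hΨa n⟩ ≤ (((Set.range (Φ n).1) \ {⊥}) \ {b n}).ncard :=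
          Set.ncard_le_ncard hsub ((hfin (Φ n)).subset Set.diff_subset)
      _ < μ (Φ n) := Set.ncard_lt_ncard hss (hfin (Φ n))
  -- superlevel sets
  let G : ℕ → Set S := fun n => {x | b n ≤ (Φ n).1 x}
  have hGlow : ∀ n, IsLowerSet (G n) := by
    intro n x y hyx hx
    exact le_trans hx ((Φ n).2 hyx)
  -- extract a monotone subsequence for the `b`'s
  haveI : IsTrans W (· ≤ ·) := ⟨fun _ _ _ => le_trans⟩
  haveI : IsRefl W (· ≤ ·) := ⟨le_refl⟩
  have pwoW : (Set.univ : Set W).PartiallyWellOrderedOn (· ≤ ·) := fun f => hW (fun n => (f n).1)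
  obtain ⟨e1, he1⟩ := pwoW.exists_monotone_subseq (f := b) (fun _ => Set.mem_univ _)
  -- extract a monotone subsequence for the `G`'s
  let Q := {A : Set S // IsUpperSet A}
  let rQ : Q → Q → Prop := fun A B => (B : Set S) ⊆ (A : Set S)
  haveI : IsTrans Q rQ := ⟨fun _ _ _ hab hbc => Set.Subset.trans hbc hab⟩
  haveI : IsRefl Q rQ := ⟨fun _ => subset_rfl⟩
  have pwoQ : (Set.univ : Set Q).PartiallyWellOrderedOn rQ := fun F => hFS (fun n => (F n).1)
  obtain ⟨e2, he2⟩ := pwoQ.exists_monotone_subseq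
      (f := fun m => (⟨(G (e1 m))ᶜ, (hGlow (e1 m)).compl⟩ : Q)) (fun _ => Set.mem_univ _)
  let a : ℕ → ℕ := fun m => e1 (e2 m)
  have ha : StrictMono a := e1.strictMono.comp e2.strictMono
  have hab : ∀ m n, m ≤ n → b (a m) ≤ b (a n) := fun m n h => he1 _ _ (e2.monotone h)
  have haG : ∀ m n, m ≤ n → G (a m) ⊆ G (a n) := by
    intro m n h
    have h2 := he2 m n h
    exact Set.compl_subset_compl.1 h2
  -- the combined sequence
  let Θ : ℕ → D := fun m => if m < a 0 then Φ m else ⟨Ψ (a (m - a 0)), hΨa _⟩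
  by_cases hΘ : BadSeq r Θ
  · -- contradiction with minimality at position `a 0`
    have hagree : ∀ m, m < a 0 → Θ m = Φ m := fun m hm => if_pos hm
    have hmin := hΦmin (a 0) Θ hΘ hagree
    have hΘa0 : Θ (a 0) = ⟨Ψ (a 0), hΨa _⟩ := by
      show (if a 0 < a 0 then Φ (a 0) else ⟨Ψ (a (a 0 - a 0)), hΨa _⟩) = _
      rw [if_neg (lt_irrefl _), Nat.sub_self]
    rw [hΘa0] at hmin
    exact absurd hmin (not_le.2 (hμdrop (a 0)))
  · -- a good pair in `Θ` yields a good pair in `Φ`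
    simp only [BadSeq] at hΘ
    push_neg at hΘ
    obtain ⟨i, j, hij, hgood⟩ := hΘ
    by_cases hj : j < a 0
    · have hi : i < a 0 := hij.trans hj
      rw [show Θ i = Φ i from if_pos hi, show Θ j = Φ j from if_pos hj] at hgood
      exact hΦbad i j hij hgood
    · push_neg at hj
      by_cases hi : i < a 0
      · rw [show Θ i = Φ i from if_pos hi,
          show Θ j = ⟨Ψ (a (j - a 0)), hΨa _⟩ from if_neg (not_lt.2 hj)] at hgood
        refine hΦbad i (a (j - a 0)) (hi.trans_le ((ha.monotone (Nat.zero_le _)))) ?_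
        intro x
        exact le_trans (hgood x) (hΨle _ x)
      · push_neg at hi
        rw [show Θ i = ⟨Ψ (a (i - a 0)), hΨa _⟩ from if_neg (not_lt.2 hi),
          show Θ j = ⟨Ψ (a (j - a 0)), hΨa _⟩ from if_neg (not_lt.2 hj)] at hgood
        set p := i - a 0 with hp
        set q := j - a 0 with hq
        have hpq : p < q := by omega
        have hlt : a p < a q := ha hpq
        refine hΦbad (a p) (a q) hlt ?_
        intro x
        by_cases hx : (Φ (a p)).1 x ≤ b (a p)
        · by_cases hbot : (Φ (a p)).1 x = ⊥
          · rw [hbot]; exact bot_le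
          · have hxb : (Φ (a p)).1 x = b (a p) := by
              rcases lt_or_eq_of_le hx with h' | h'
              · exact absurd h' (hbmin (a p) _ ⟨Set.mem_range_self x, by simpa using hbot⟩)
              · exact h'
            have hxG : x ∈ G (a p) := le_of_eq hxb.symm
            have hxG' : x ∈ G (a q) := haG p q hpq.le hxG
            calc (Φ (a p)).1 x = b (a p) := hxb
              _ ≤ b (a q) := hab p q hpq.le
              _ ≤ (Φ (a q)).1 x := hxG'
        · have h1 : Ψ (a p) x = (Φ (a p)).1 x := if_neg hx
          calc (Φ (a p)).1 x = Ψ (a p) x := h1.symm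
            _ ≤ Ψ (a q) x := hgood x
            _ ≤ (Φ (a q)).1 x := hΨle _ x

/-- Let `S` be a nonempty ordered set. If the set of final segments of `S`, ordered by
reverse inclusion, is Noetherian, then for every Noetherian ordered set `T` the set of
decreasing maps `S → T`, ordered pointwise, is Noetherian. -/
theorem stmt_8 {S : Type*} [PartialOrder S] [Nonempty S]
    (hFS : ∀ F : ℕ → {A : Set S // IsUpperSet A},
      ∃ i j : ℕ, i < j ∧ ((F j : Set S)) ⊆ (F i : Set S)) :
    ∀ (T : Type*) [PartialOrder T],
      (∀ f : ℕ → T, ∃ i j : ℕ, i < j ∧ f i ≤ f j) →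
      ∀ Φ : ℕ → {φ : S → T // Antitone φ},
        ∃ i j : ℕ, i < j ∧ ∀ x : S, (Φ i).1 x ≤ (Φ j).1 x := by
  intro T _ hT Φ
  have hW : ∀ f : ℕ → WithBot T, ∃ i j : ℕ, i < j ∧ f i ≤ f j := by
    intro f
    by_cases h : ∀ n, ∃ t : T, f n = ↑t
    · choose g hg using h
      obtain ⟨i, j, hij, hle⟩ := hT g
      exact ⟨i, j, hij, by rw [hg i, hg j]; exact WithBot.coe_le_coe.2 hle⟩
    · push_neg at h
      obtain ⟨n, hn⟩ := h
      have hfn : f n = ⊥ := by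
        by_contra hb
        obtain ⟨t, ht⟩ := WithBot.ne_bot_iff_exists.1 hb
        exact hn t ht.symm
      exact ⟨n, n + 1, Nat.lt_succ_self n, hfn ▸ bot_le⟩
  have hmain := aux_core hFS hW (fun n x => ((Φ n).1 x : WithBot T))
    (fun n _ _ hxy => WithBot.coe_le_coe.2 ((Φ n).2 hxy))
  obtain ⟨i, j, hij, hle⟩ := hmain
  exact ⟨i, j, hij, fun x => WithBot.coe_le_coe.1 (hle x)⟩
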